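/- arXiv:2102.01309 — 5 statements merged into one kernel-verified Lean document; each statement's English description precedes it below -/
import Mathlib

section
/- Let $y_1,\dots,y_n \in \mathbb{R}$, $a_i^t \ge 0$, and $\alpha_t = \sum_{i=1}^n a_i^t y_i$. Then $\sum_{t=1}^T \alpha_t^2 \le \max_{1\le i\le n}\left\{\sum_{t=1}^T a_i^t \left(\sum_{j=1}^n a_j^t\right)\right\} \cdot \sum_{i=1}^n y_i^2$. -/
theorem stmt1 (n T : ℕ) (y : Fin n → ℝ) (a : Fin n → Fin T → ℝ)
    (ha : ∀ i t, 0 ≤ a i t)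
    (α : Fin T → ℝ) (hα : ∀ t, α t = ∑ i, a i t * y i) :
    ∑ t, (α t) ^ 2 ≤ (⨆ i : Fin n, ∑ t, a i t * ∑ j, a j t) * ∑ i, (y i) ^ 2 := by
  rcases Nat.eq_zero_or_pos n with hn | hn
  · subst hn
    simp only [Finset.univ_eq_empty, Finset.sum_empty] at hα ⊢
    simp [hα]
  · have : Nonempty (Fin n) := ⟨⟨0, hn⟩⟩
    set M := ⨆ i : Fin n, ∑ t, a i t * ∑ j, a j t with hM
    have hbdd : BddAbove (Set.range fun i : Fin n => ∑ t, a i t * ∑ j, a j t) :=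
      Set.Finite.bddAbove (Set.finite_range _)
    have hMle : ∀ i, (∑ t, a i t * ∑ j, a j t) ≤ M := fun i => le_ciSup hbdd i
    -- Cauchy–Schwarz per t
    have hCS : ∀ t, (α t) ^ 2 ≤ (∑ j, a j t) * ∑ i, a i t * (y i) ^ 2 := by
      intro t
      rw [hα]
      have h := Finset.sum_mul_sq_le_sq_mul_sq Finset.univ
        (fun i => Real.sqrt (a i t)) (fun i => Real.sqrt (a i t) * y i)
      simp only [← mul_assoc, Real.mul_self_sqrt (ha _ t), mul_pow,
        Real.sq_sqrt (ha _ t)] at h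
      exact h
    calc ∑ t, (α t) ^ 2 ≤ ∑ t, (∑ j, a j t) * ∑ i, a i t * (y i) ^ 2 :=
          Finset.sum_le_sum fun t _ => hCS t
      _ = ∑ i, (∑ t, a i t * ∑ j, a j t) * (y i) ^ 2 := by
          simp only [Finset.sum_mul, Finset.mul_sum]
          rw [Finset.sum_comm]
          exact Finset.sum_congr rfl fun i _ => Finset.sum_congr rfl fun t _ =>
            Finset.sum_congr rfl fun j _ => by ring
      _ ≤ ∑ i, M * (y i) ^ 2 :=
          Finset.sum_le_sum fun i _ =>
            mul_le_mul_of_nonneg_right (hMle i) (sq_nonneg _)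
      _ = M * ∑ i, (y i) ^ 2 := by rw [Finset.mul_sum]
end

section
/- Let $A, B$ be positive definite real symmetric matrices, and define $\delta_\infty(A,B) := \|\log(A^{-1/2} B A^{-1/2})\|$ (operator norm of the matrix logarithm). If $L \preceq A \preceq U$ and $L \preceq B \preceq U$ for positive definite matrices $L, U$, then $\delta_\infty(A,B) \le \log\left(\frac{\lambda_{\max}(U)}{\lambda_{\min}(L)}\right)$. -/
open scoped Matrix.Norms.L2Operator Classical
open Matrix

noncomputable section

/-- Loewner order: `A ⪯ B` iff `B - A` is positive semidefinite. -/
def Loewner {n : ℕ} (A B : Matrix (Fin n) (Fin n) ℝ) : Prop := (B - A).PosSemidef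

/-- Matrix logarithm of a Hermitian matrix (junk value `0` otherwise). -/
def mlog {n : ℕ} (M : Matrix (Fin n) (Fin n) ℝ) : Matrix (Fin n) (Fin n) ℝ :=
  if h : M.IsHermitian then h.cfc Real.log else 0

/-- Inverse square root `M^{-1/2}` of a Hermitian (positive definite) matrix. -/
def minvSqrt {n : ℕ} (M : Matrix (Fin n) (Fin n) ℝ) : Matrix (Fin n) (Fin n) ℝ :=
  if h : M.IsHermitian then h.cfc (fun x => (Real.sqrt x)⁻¹) else 0

/-- The invariant metric `δ∞(A,B) = ‖log (A^{-1/2} B A^{-1/2})‖` (spectral norm). -/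
def deltaInf {n : ℕ} (A B : Matrix (Fin n) (Fin n) ℝ) : ℝ :=
  ‖mlog (minvSqrt A * B * minvSqrt A)‖

/-- Largest eigenvalue of a Hermitian matrix. -/
def lmax {n : ℕ} (M : Matrix (Fin n) (Fin n) ℝ) : ℝ :=
  if h : M.IsHermitian then ⨆ i, h.eigenvalues i else 0

/-- Smallest eigenvalue of a Hermitian matrix. -/
def lmin {n : ℕ} (M : Matrix (Fin n) (Fin n) ℝ) : ℝ :=
  if h : M.IsHermitian then ⨅ i, h.eigenvalues i else 0

/-- The Riccati operator `F_{Q,R}(P)`. -/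
def Ricc {n m : ℕ} (A : Matrix (Fin n) (Fin n) ℝ) (B : Matrix (Fin n) (Fin m) ℝ)
    (Q : Matrix (Fin n) (Fin n) ℝ) (R : Matrix (Fin m) (Fin m) ℝ)
    (P : Matrix (Fin n) (Fin n) ℝ) : Matrix (Fin n) (Fin n) ℝ :=
  Q + Aᵀ * P * A - Aᵀ * P * B * (R + Bᵀ * P * B)⁻¹ * Bᵀ * P * A


section Helpers

variable {n : ℕ}

lemma transpose_eq_of_herm {C : Matrix (Fin n) (Fin n) ℝ} (hC : C.IsHermitian) : Cᵀ = C := by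
  ext i j
  have := congrFun (congrFun hC i) j
  simpa [Matrix.conjTranspose_apply, Matrix.transpose_apply] using this

lemma herm_smul_one_sub {M : Matrix (Fin n) (Fin n) ℝ} (hM : M.IsHermitian) (c : ℝ) :
    (c • (1 : Matrix (Fin n) (Fin n) ℝ) - M).IsHermitian := by
  simp [Matrix.IsHermitian, Matrix.conjTranspose_sub, Matrix.conjTranspose_smul, hM.eq,
    transpose_eq_of_herm hM]

lemma herm_sub_smul_one {M : Matrix (Fin n) (Fin n) ℝ} (hM : M.IsHermitian) (c : ℝ) :
    (M - c • (1 : Matrix (Fin n) (Fin n) ℝ)).IsHermitian := by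
  simp [Matrix.IsHermitian, Matrix.conjTranspose_sub, Matrix.conjTranspose_smul, hM.eq,
    transpose_eq_of_herm hM]

lemma mem_spec_shift {M : Matrix (Fin n) (Fin n) ℝ} {c μ : ℝ}
    (h : μ ∈ spectrum ℝ (c • (1 : Matrix (Fin n) (Fin n) ℝ) - M)) :
    c - μ ∈ spectrum ℝ M := by
  rw [spectrum.mem_iff] at h ⊢
  intro hu
  apply h
  have he : algebraMap ℝ (Matrix (Fin n) (Fin n) ℝ) μ - (c • 1 - M)
      = -(algebraMap ℝ (Matrix (Fin n) (Fin n) ℝ) (c - μ) - M) := by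
    simp only [Algebra.algebraMap_eq_smul_one, sub_smul]
    abel
  rw [he]
  exact hu.neg

lemma mem_spec_shift' {M : Matrix (Fin n) (Fin n) ℝ} {c μ : ℝ}
    (h : μ ∈ spectrum ℝ (M - c • (1 : Matrix (Fin n) (Fin n) ℝ))) :
    μ + c ∈ spectrum ℝ M := by
  rw [spectrum.mem_iff] at h ⊢
  intro hu
  apply h
  have he : algebraMap ℝ (Matrix (Fin n) (Fin n) ℝ) μ - (M - c • 1)
      = algebraMap ℝ (Matrix (Fin n) (Fin n) ℝ) (μ + c) - M := by
    simp only [Algebra.algebraMap_eq_smul_one, add_smul]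
    abel
  rw [he]
  exact hu

lemma quad_le {M : Matrix (Fin n) (Fin n) ℝ} (hM : M.IsHermitian) {c : ℝ}
    (hc : ∀ x ∈ spectrum ℝ M, x ≤ c) (v : Fin n → ℝ) :
    v ⬝ᵥ (M *ᵥ v) ≤ c * (v ⬝ᵥ v) := by
  have hN := herm_smul_one_sub hM c
  have hpsd : (c • (1 : Matrix (Fin n) (Fin n) ℝ) - M).PosSemidef := by
    refine hN.posSemidef_iff_eigenvalues_nonneg.mpr fun i => (?_ : (0 : ℝ) ≤ _)
    have h2 := mem_spec_shift (hN.eigenvalues_mem_spectrum_real i)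
    have := hc _ h2
    linarith
  have h0 := hpsd.dotProduct_mulVec_nonneg v
  simp only [star_trivial, Matrix.sub_mulVec, Matrix.smul_mulVec, Matrix.one_mulVec,
    dotProduct_sub, dotProduct_smul, smul_eq_mul] at h0
  linarith

lemma quad_ge {M : Matrix (Fin n) (Fin n) ℝ} (hM : M.IsHermitian) {c : ℝ}
    (hc : ∀ x ∈ spectrum ℝ M, c ≤ x) (v : Fin n → ℝ) :
    c * (v ⬝ᵥ v) ≤ v ⬝ᵥ (M *ᵥ v) := by
  have hN := herm_sub_smul_one hM c
  have hpsd : (M - c • (1 : Matrix (Fin n) (Fin n) ℝ)).PosSemidef := by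
    refine hN.posSemidef_iff_eigenvalues_nonneg.mpr fun i => (?_ : (0 : ℝ) ≤ _)
    have h2 := mem_spec_shift' (hN.eigenvalues_mem_spectrum_real i)
    have := hc _ h2
    linarith
  have h0 := hpsd.dotProduct_mulVec_nonneg v
  simp only [star_trivial, Matrix.sub_mulVec, Matrix.smul_mulVec, Matrix.one_mulVec,
    dotProduct_sub, dotProduct_smul, smul_eq_mul] at h0
  linarith

lemma loewner_quad {P Q : Matrix (Fin n) (Fin n) ℝ} (h : Loewner P Q) (v : Fin n → ℝ) :
    v ⬝ᵥ (P *ᵥ v) ≤ v ⬝ᵥ (Q *ᵥ v) := by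
  have h0 := h.dotProduct_mulVec_nonneg v
  simp only [star_trivial, Matrix.sub_mulVec, dotProduct_sub] at h0
  linarith

lemma spec_le_lmax {M : Matrix (Fin n) (Fin n) ℝ} (hM : M.IsHermitian) :
    ∀ x ∈ spectrum ℝ M, x ≤ lmax M := by
  intro x hx
  rw [hM.spectrum_real_eq_range_eigenvalues] at hx
  obtain ⟨i, rfl⟩ := hx
  simp only [lmax, dif_pos hM]
  exact le_ciSup (Set.Finite.bddAbove (Set.finite_range _)) i

lemma spec_ge_lmin {M : Matrix (Fin n) (Fin n) ℝ} (hM : M.IsHermitian) :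
    ∀ x ∈ spectrum ℝ M, lmin M ≤ x := by
  intro x hx
  rw [hM.spectrum_real_eq_range_eigenvalues] at hx
  obtain ⟨i, rfl⟩ := hx
  simp only [lmin, dif_pos hM]
  exact ciInf_le (Set.Finite.bddBelow (Set.finite_range _)) i

lemma lmin_pos {M : Matrix (Fin n) (Fin n) ℝ} (hM : M.PosDef) (hn : 0 < n) : 0 < lmin M := by
  haveI : Nonempty (Fin n) := ⟨⟨0, hn⟩⟩
  obtain ⟨i0, hi0⟩ := Finite.exists_min hM.1.eigenvalues
  simp only [lmin, dif_pos hM.1]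
  exact lt_of_lt_of_le (hM.eigenvalues_pos i0) (le_ciInf hi0)

lemma lmax_pos {M : Matrix (Fin n) (Fin n) ℝ} (hM : M.PosDef) (hn : 0 < n) : 0 < lmax M := by
  haveI : Nonempty (Fin n) := ⟨⟨0, hn⟩⟩
  simp only [lmax, dif_pos hM.1]
  exact lt_of_lt_of_le (hM.eigenvalues_pos ⟨0, hn⟩)
    (le_ciSup (Set.Finite.bddAbove (Set.finite_range _)) _)

lemma spec_pos {M : Matrix (Fin n) (Fin n) ℝ} (hM : M.PosDef) :
    ∀ x ∈ spectrum ℝ M, 0 < x := by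
  intro x hx
  rw [hM.1.spectrum_real_eq_range_eigenvalues] at hx
  obtain ⟨i, rfl⟩ := hx
  exact hM.eigenvalues_pos i

lemma dotProduct_self_pos' {v : Fin n → ℝ} (hv : v ≠ 0) : 0 < v ⬝ᵥ v := by
  have hd : v ⬝ᵥ v = ∑ i, v i * v i := rfl
  obtain ⟨j, hj⟩ := Function.ne_iff.mp hv
  rw [hd]
  exact Finset.sum_pos' (fun i _ => mul_self_nonneg _)
    ⟨j, Finset.mem_univ j, mul_self_pos.mpr hj⟩

lemma conj_quad {C M : Matrix (Fin n) (Fin n) ℝ} (hC : C.IsHermitian) (v : Fin n → ℝ) :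
    v ⬝ᵥ ((C * M * C) *ᵥ v) = (C *ᵥ v) ⬝ᵥ (M *ᵥ (C *ᵥ v)) := by
  rw [← Matrix.mulVec_mulVec, ← Matrix.mulVec_mulVec, Matrix.dotProduct_mulVec,
    ← Matrix.mulVec_transpose, transpose_eq_of_herm hC]

lemma conj_isHermitian {C M : Matrix (Fin n) (Fin n) ℝ} (hC : C.IsHermitian)
    (hM : M.IsHermitian) : (C * M * C).IsHermitian := by
  show (C * M * C)ᴴ = C * M * C
  simp [Matrix.conjTranspose_mul, hC.eq, hM.eq, Matrix.mul_assoc,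
    transpose_eq_of_herm hC, transpose_eq_of_herm hM]

lemma minvSqrt_eq_cfc {A : Matrix (Fin n) (Fin n) ℝ} (hA : A.IsHermitian) :
    minvSqrt A = cfc (fun x => (Real.sqrt x)⁻¹) A := by
  rw [minvSqrt, dif_pos hA]
  exact (hA.cfc_eq _).symm

lemma mlog_eq_cfc {A : Matrix (Fin n) (Fin n) ℝ} (hA : A.IsHermitian) :
    mlog A = cfc Real.log A := by
  rw [mlog, dif_pos hA]
  exact (hA.cfc_eq _).symm

lemma minvSqrt_conj_self {A : Matrix (Fin n) (Fin n) ℝ} (hA : A.PosDef) :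
    minvSqrt A * A * minvSqrt A = 1 := by
  have hherm : A.IsHermitian := hA.1
  have hsa : IsSelfAdjoint A := hherm
  set f : ℝ → ℝ := fun x => (Real.sqrt x)⁻¹ with hf
  have hcont : ContinuousOn f (spectrum ℝ A) :=
    Real.continuous_sqrt.continuousOn.inv₀ fun x hx =>
      ne_of_gt (Real.sqrt_pos.mpr (spec_pos hA x hx))
  have step1 : minvSqrt A * A * minvSqrt A = cfc f A * cfc (fun x : ℝ => x) A * cfc f A := by
    rw [minvSqrt_eq_cfc hherm, cfc_id' ℝ A hsa]
  rw [step1, ← cfc_mul f (fun x : ℝ => x) A hcont continuousOn_id,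
    ← cfc_mul (fun x => f x * x) f A (hcont.mul continuousOn_id) hcont]
  have step2 : cfc (fun x => f x * x * f x) A = cfc (fun _ : ℝ => 1) A := by
    apply cfc_congr
    intro x hx
    have hxpos := spec_pos hA x hx
    have h0 : Real.sqrt x ≠ 0 := ne_of_gt (Real.sqrt_pos.mpr hxpos)
    have hs : Real.sqrt x * Real.sqrt x = x := Real.mul_self_sqrt hxpos.le
    simp only [hf]
    field_simp
    rw [Real.sq_sqrt hxpos.le]
  rw [step2, cfc_const_one ℝ A hsa]

lemma norm_diagonal_le (d : Fin n → ℝ) {c : ℝ} (hc : 0 ≤ c) (h : ∀ i, |d i| ≤ c) :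
    ‖(Matrix.diagonal d : Matrix (Fin n) (Fin n) ℝ)‖ ≤ c := by
  rw [Matrix.l2_opNorm_def]
  refine ContinuousLinearMap.opNorm_le_bound _ hc fun x => ?_
  have happ : (LinearMap.toContinuousLinearMap ((Matrix.toEuclideanLin
      (𝕜 := ℝ) (m := Fin n) (n := Fin n)) (Matrix.diagonal d))) x
      = Matrix.toEuclideanLin (Matrix.diagonal d) x := rfl
  rw [LinearEquiv.trans_apply, happ, Matrix.toEuclideanLin_apply]
  rw [EuclideanSpace.norm_eq, EuclideanSpace.norm_eq]
  have hle : ∑ i, ‖(WithLp.equiv 2 (Fin n → ℝ)).symm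
      (Matrix.diagonal d *ᵥ (WithLp.equiv 2 (Fin n → ℝ)) x) i‖ ^ 2
      ≤ ∑ i, c ^ 2 * ‖x i‖ ^ 2 := by
    apply Finset.sum_le_sum
    intro i _
    have hcomp : (WithLp.equiv 2 (Fin n → ℝ)).symm
        (Matrix.diagonal d *ᵥ (WithLp.equiv 2 (Fin n → ℝ)) x) i = d i * x i := by
      simp [Matrix.mulVec_diagonal]
    rw [hcomp]
    have h1 : |d i * x i| ≤ c * |x i| :=
      (abs_mul _ _).le.trans (mul_le_mul_of_nonneg_right (h i) (abs_nonneg _))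
    have h2 : ‖d i * x i‖ = |d i * x i| := rfl
    rw [h2]
    calc |d i * x i| ^ 2 ≤ (c * |x i|) ^ 2 := by
          apply pow_le_pow_left₀ (abs_nonneg _) h1
      _ = c ^ 2 * ‖x i‖ ^ 2 := by rw [mul_pow]; rfl
  calc Real.sqrt (∑ i, ‖(WithLp.equiv 2 (Fin n → ℝ)).symm
      (Matrix.diagonal d *ᵥ (WithLp.equiv 2 (Fin n → ℝ)) x) i‖ ^ 2)
      ≤ Real.sqrt (∑ i, c ^ 2 * ‖x i‖ ^ 2) := Real.sqrt_le_sqrt hle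
    _ = c * Real.sqrt (∑ i, ‖x i‖ ^ 2) := by
        rw [← Finset.mul_sum, Real.sqrt_mul (sq_nonneg c), Real.sqrt_sq hc]

end Helpers
theorem stmt4 {n : ℕ} (A B L U : Matrix (Fin n) (Fin n) ℝ)
    (hA : A.PosDef) (hB : B.PosDef) (hL : L.PosDef) (hU : U.PosDef)
    (hLA : Loewner L A) (hAU : Loewner A U) (hLB : Loewner L B) (hBU : Loewner B U) :
    deltaInf A B ≤ Real.log (lmax U / lmin L) := by
  rcases Nat.eq_zero_or_pos n with hn | hn
  · subst hn
    have h1 : deltaInf A B = 0 := by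
      have h0 : mlog (minvSqrt A * B * minvSqrt A) = 0 := Subsingleton.elim _ _
      rw [deltaInf, h0, norm_zero]
    rw [h1, lmax, lmin, dif_pos hU.1, dif_pos hL.1, Real.iSup_of_isEmpty, Real.iInf_of_isEmpty]
    simp
  · haveI : Nonempty (Fin n) := ⟨⟨0, hn⟩⟩
    have hAh := hA.1
    have hCh : (minvSqrt A).IsHermitian := by
      rw [minvSqrt_eq_cfc hAh]
      exact cfc_predicate _ A
    have hCAC : minvSqrt A * A * minvSqrt A = 1 := minvSqrt_conj_self hA
    have hSh : (minvSqrt A * B * minvSqrt A).IsHermitian := conj_isHermitian hCh hB.1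
    set lm := lmin L with hlmdef
    set lM := lmax U with hlMdef
    have hlm : 0 < lm := lmin_pos hL hn
    have hlM : 0 < lM := lmax_pos hU hn
    have keybound : ∀ i : Fin n, |Real.log (hSh.eigenvalues i)| ≤ Real.log (lM / lm) := by
      intro i
      set μ := hSh.eigenvalues i with hμdef
      set v : Fin n → ℝ := ⇑(hSh.eigenvectorBasis i) with hvdef
      have hv : (minvSqrt A * B * minvSqrt A) *ᵥ v = μ • v := hSh.mulVec_eigenvectorBasis i
      have hvne : v ≠ 0 := by
        intro h0
        have hb : (hSh.eigenvectorBasis i) = 0 := by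
          ext j
          exact congrFun h0 j
        have hnorm := hSh.eigenvectorBasis.orthonormal.1 i
        rw [hb] at hnorm
        simpa using hnorm
      set w := minvSqrt A *ᵥ v with hwdef
      have htv : 0 < v ⬝ᵥ v := dotProduct_self_pos' hvne
      have h1 : v ⬝ᵥ ((minvSqrt A * B * minvSqrt A) *ᵥ v) = μ * (v ⬝ᵥ v) := by
        rw [hv, dotProduct_smul, smul_eq_mul]
      have h2 : v ⬝ᵥ ((minvSqrt A * B * minvSqrt A) *ᵥ v) = w ⬝ᵥ (B *ᵥ w) := conj_quad hCh v
      have h3 : v ⬝ᵥ v = w ⬝ᵥ (A *ᵥ w) := by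
        have hq := conj_quad (M := A) hCh v
        rw [hCAC, Matrix.one_mulVec] at hq
        exact hq
      have bB1 : lm * (w ⬝ᵥ w) ≤ w ⬝ᵥ (B *ᵥ w) :=
        le_trans (quad_ge hL.1 (spec_ge_lmin hL.1) w) (loewner_quad hLB w)
      have bB2 : w ⬝ᵥ (B *ᵥ w) ≤ lM * (w ⬝ᵥ w) :=
        le_trans (loewner_quad hBU w) (quad_le hU.1 (spec_le_lmax hU.1) w)
      have bA1 : lm * (w ⬝ᵥ w) ≤ w ⬝ᵥ (A *ᵥ w) :=
        le_trans (quad_ge hL.1 (spec_ge_lmin hL.1) w) (loewner_quad hLA w)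
      have bA2 : w ⬝ᵥ (A *ᵥ w) ≤ lM * (w ⬝ᵥ w) :=
        le_trans (loewner_quad hAU w) (quad_le hU.1 (spec_le_lmax hU.1) w)
      have hμtv : μ * (v ⬝ᵥ v) = w ⬝ᵥ (B *ᵥ w) := by rw [← h1, h2]
      have hww : 0 < w ⬝ᵥ w := by
        by_contra hcon
        push_neg at hcon
        nlinarith [h3, bA2, htv, hlM]
      have hμpos : 0 < μ := by
        by_contra hcon
        push_neg at hcon
        nlinarith [bB1, hμtv, htv, hww, hlm]
      have hup : μ ≤ lM / lm := by
        rw [le_div_iff₀ hlm]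
        nlinarith [mul_le_mul_of_nonneg_left bA1 hμpos.le, hμtv, bB2, hww]
      have hdn : lm / lM ≤ μ := by
        rw [div_le_iff₀ hlM]
        nlinarith [mul_le_mul_of_nonneg_left bA2 hμpos.le, hμtv, bB1, hww, h3]
      rw [abs_le]
      constructor
      · have hlog1 : Real.log (lm / lM) ≤ Real.log μ :=
          Real.log_le_log (div_pos hlm hlM) hdn
        have hd1 : Real.log (lm / lM) = Real.log lm - Real.log lM :=
          Real.log_div hlm.ne' hlM.ne'
        have hd2 : Real.log (lM / lm) = Real.log lM - Real.log lm :=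
          Real.log_div hlM.ne' hlm.ne'
        linarith
      · exact (Real.log_le_log hμpos hup).trans_eq rfl
    have hlogR : 0 ≤ Real.log (lM / lm) := le_trans (abs_nonneg _) (keybound ⟨0, hn⟩)
    rw [deltaInf, mlog, dif_pos hSh, Matrix.IsHermitian.cfc, Unitary.conjStarAlgAut_apply]
    rw [← Unitary.coe_star]
    rw [CStarRing.norm_mul_coe_unitary, CStarRing.norm_coe_unitary_mul]
    have hd : (RCLike.ofReal ∘ Real.log ∘ hSh.eigenvalues : Fin n → ℝ)
        = fun i => Real.log (hSh.eigenvalues i) := by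
      ext i
      simp
    rw [hd]
    exact norm_diagonal_le _ hlogR keybound
end
end

section
/- Let $A, B$ be positive definite real symmetric matrices with $\delta_\infty(A,B) := \|\log(A^{-1/2} B A^{-1/2})\|$. If $A \preceq U$ for a positive definite matrix $U$ and $\delta_\infty(A,B) \le c$ for some $c > 0$, then $\|A - B\| \le \lambda_{\max}(U)\,\frac{e^c - 1}{c}\,\delta_\infty(A,B)$. -/
open scoped Matrix.Norms.L2Operator Classical
open Matrix

noncomputable section

section Aux

variable {N : ℕ} {A : Matrix (Fin N) (Fin N) ℝ}

private lemma hcfc_norm_eq (hA : A.IsHermitian) (f : ℝ → ℝ) :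
    ‖hA.cfc f‖ = ‖(diagonal (f ∘ hA.eigenvalues) : Matrix (Fin N) (Fin N) ℝ)‖ := by
  rw [Matrix.IsHermitian.cfc, Unitary.conjStarAlgAut_apply]
  rw [mul_assoc, CStarRing.norm_mem_unitary_mul _ (SetLike.coe_mem hA.eigenvectorUnitary),
    CStarRing.norm_mul_mem_unitary _ (Unitary.star_mem (SetLike.coe_mem hA.eigenvectorUnitary))]
  congr 1

private lemma hcfc_mul (hA : A.IsHermitian) (f g : ℝ → ℝ) :
    hA.cfc f * hA.cfc g = hA.cfc (fun x => f x * g x) := by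
  simp only [Matrix.IsHermitian.cfc, Unitary.conjStarAlgAut_apply]
  have key : (star (hA.eigenvectorUnitary : Matrix (Fin N) (Fin N) ℝ)) *
      (hA.eigenvectorUnitary : Matrix (Fin N) (Fin N) ℝ) = 1 :=
    Unitary.star_mul_self_of_mem (SetLike.coe_mem _)
  have h6 : ∀ a b c d e f : Matrix (Fin N) (Fin N) ℝ,
      (a * b * c) * (d * e * f) = a * (b * (c * d) * e) * f := by
    intros; simp only [mul_assoc]
  rw [h6, key, mul_one, diagonal_mul_diagonal]
  congr 1

private lemma hcfc_congr (hA : A.IsHermitian) {f g : ℝ → ℝ}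
    (h : ∀ i, f (hA.eigenvalues i) = g (hA.eigenvalues i)) : hA.cfc f = hA.cfc g := by
  simp only [Matrix.IsHermitian.cfc, Unitary.conjStarAlgAut_apply]
  congr 1
  congr 1
  ext i j
  by_cases hij : i = j <;> simp [diagonal, hij, h]

private lemma hcfc_id (hA : A.IsHermitian) : hA.cfc (fun x => x) = A := by
  conv_rhs => rw [hA.spectral_theorem]
  rfl

private lemma hcfc_one (hA : A.IsHermitian) : hA.cfc (fun _ => 1) = 1 := by
  simp only [Matrix.IsHermitian.cfc, Unitary.conjStarAlgAut_apply]
  rw [show (RCLike.ofReal ∘ (fun _ => (1:ℝ)) ∘ hA.eigenvalues) = fun _ => (1:ℝ) from rfl,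
    diagonal_one, mul_one]
  exact Unitary.mul_star_self_of_mem (SetLike.coe_mem _)

private lemma hcfc_sub (hA : A.IsHermitian) (f g : ℝ → ℝ) :
    hA.cfc f - hA.cfc g = hA.cfc (fun x => f x - g x) := by
  simp only [Matrix.IsHermitian.cfc, Unitary.conjStarAlgAut_apply]
  rw [← sub_mul, ← mul_sub, diagonal_sub]
  congr 1

private lemma hcfc_herm (hA : A.IsHermitian) (f : ℝ → ℝ) : (hA.cfc f).IsHermitian := by
  show _ᴴ = _
  rw [← star_eq_conjTranspose]
  simp only [Matrix.IsHermitian.cfc, Unitary.conjStarAlgAut_apply, StarMul.star_mul, star_star, mul_assoc]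
  congr 2
  rw [star_eq_conjTranspose, diagonal_conjTranspose]
  congr 1

private lemma hcfc_psd (hA : A.IsHermitian) (f : ℝ → ℝ) (h : ∀ i, 0 ≤ f (hA.eigenvalues i)) :
    (hA.cfc f).PosSemidef := by
  have h1 : hA.cfc f
      = (hA.cfc (fun x => Real.sqrt (f x)))ᴴ * hA.cfc (fun x => Real.sqrt (f x)) := by
    rw [(hcfc_herm hA _).eq, hcfc_mul]
    exact (hcfc_congr hA fun i => (Real.mul_self_sqrt (h i)).symm)
  rw [h1]
  exact posSemidef_conjTranspose_mul_self _

private lemma hcfc_const (hA : A.IsHermitian) (r : ℝ) :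
    hA.cfc (fun _ => r) = r • (1 : Matrix (Fin N) (Fin N) ℝ) := by
  simp only [Matrix.IsHermitian.cfc, Unitary.conjStarAlgAut_apply]
  have h1 : (diagonal (RCLike.ofReal ∘ (fun _ => r) ∘ hA.eigenvalues) : Matrix (Fin N) (Fin N) ℝ)
      = r • 1 := by
    ext i j
    rcases eq_or_ne i j with h | h <;>
      simp [diagonal_apply, Matrix.one_apply, h, Matrix.smul_apply]
  rw [h1, mul_smul_comm, smul_mul_assoc, mul_one,
    Unitary.mul_star_self_of_mem (SetLike.coe_mem _)]

private lemma diag_norm_le (v : Fin N → ℝ) {r : ℝ} (hr : 0 ≤ r) (h : ∀ i, |v i| ≤ r) :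
    ‖(diagonal v : Matrix (Fin N) (Fin N) ℝ)‖ ≤ r := by
  rw [Matrix.l2_opNorm_def]
  refine ContinuousLinearMap.opNorm_le_bound _ hr fun x => ?_
  have hx : ∀ y : EuclideanSpace ℝ (Fin N), ‖y‖ = Real.sqrt (∑ i, (y i)^2) := by
    intro y
    rw [EuclideanSpace.norm_eq]
    congr 1
    exact Finset.sum_congr rfl fun i _ => by rw [Real.norm_eq_abs, sq_abs]
  have happ : ∀ i, ((LinearMap.toContinuousLinearMap (toEuclideanLin (diagonal v))) x) i
      = v i * x i := by
    intro i
    show (diagonal v *ᵥ x) i = _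
    rw [mulVec_diagonal]
  rw [hx, hx]
  have h1 : ∑ i, (((LinearMap.toContinuousLinearMap (toEuclideanLin (diagonal v))) x) i)^2
      ≤ r^2 * ∑ i, (x i)^2 := by
    rw [Finset.mul_sum]
    refine Finset.sum_le_sum fun i _ => ?_
    rw [happ i, mul_pow]
    have : (v i)^2 ≤ r^2 := by
      have := h i
      nlinarith [abs_nonneg (v i), sq_abs (v i)]
    nlinarith [sq_nonneg (x i)]
  calc Real.sqrt (∑ i, (((LinearMap.toContinuousLinearMap (toEuclideanLin (diagonal v))) x) i)^2)
      ≤ Real.sqrt (r^2 * ∑ i, (x i)^2) := Real.sqrt_le_sqrt h1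
    _ = r * Real.sqrt (∑ i, (x i)^2) := by
        rw [Real.sqrt_mul (sq_nonneg r), Real.sqrt_sq hr]

private lemma le_diag_norm (v : Fin N → ℝ) (j : Fin N) :
    |v j| ≤ ‖(diagonal v : Matrix (Fin N) (Fin N) ℝ)‖ := by
  have h := Matrix.l2_opNorm_mulVec (diagonal v) (EuclideanSpace.single j 1)
  have h1 : (diagonal v) *ᵥ (EuclideanSpace.single j 1 : EuclideanSpace ℝ (Fin N))
      = (EuclideanSpace.single j (v j) : EuclideanSpace ℝ (Fin N)) := by
    funext i
    show (diagonal v *ᵥ _) i = _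
    rw [mulVec_diagonal]
    by_cases hij : i = j
    · subst hij; simp [EuclideanSpace.single_apply]
    · simp [EuclideanSpace.single_apply, hij]
  rw [h1] at h
  have h2 : ‖((EuclideanSpace.equiv (Fin N) ℝ).symm <|
      (EuclideanSpace.single j (v j) : EuclideanSpace ℝ (Fin N)))‖ = |v j| := by
    show ‖(EuclideanSpace.single j (v j) : EuclideanSpace ℝ (Fin N))‖ = _
    rw [EuclideanSpace.norm_single, Real.norm_eq_abs]
  rw [h2, EuclideanSpace.norm_single, norm_one, mul_one] at h
  exact h

private lemma scalar_exp_bound {c t : ℝ} (hc : 0 < c) (ht : |t| ≤ c) :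
    |1 - Real.exp t| ≤ (Real.exp c - 1) / c * |t| := by
  have hK1 : 1 ≤ (Real.exp c - 1) / c := by
    rw [le_div_iff₀ hc]
    nlinarith [Real.add_one_le_exp c]
  rcases le_or_gt 0 t with h | h
  · have ht' : t ≤ c := le_trans (le_abs_self t) ht
    have habs : |t| = t := abs_of_nonneg h
    have h1 : Real.exp t ≤ (1 - t/c) * 1 + t/c * Real.exp c := by
      have hconv := convexOn_exp.2 (Set.mem_univ (0:ℝ)) (Set.mem_univ c)
        (show (0:ℝ) ≤ 1 - t/c by rw [sub_nonneg, div_le_one hc]; exact ht')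
        (show (0:ℝ) ≤ t/c from div_nonneg h hc.le) (by ring)
      simp only [smul_eq_mul, mul_zero, zero_add, Real.exp_zero] at hconv
      rwa [div_mul_cancel₀ _ hc.ne'] at hconv
    have h2 : 1 ≤ Real.exp t := Real.one_le_exp h
    rw [abs_sub_comm, abs_of_nonneg (by linarith), habs]
    rw [div_mul_eq_mul_div, le_div_iff₀ hc]
    have h4 : (Real.exp t) * c ≤ ((1 - t/c) * 1 + t/c * Real.exp c) * c :=
      mul_le_mul_of_nonneg_right h1 hc.le
    have e : ((1 - t/c) * 1 + t/c * Real.exp c) * c = (c - t) + t * Real.exp c := by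
      field_simp
    rw [e] at h4
    linarith
  · have habs : |t| = -t := abs_of_neg h
    have h2 : Real.exp t ≤ 1 := Real.exp_le_one_iff.mpr h.le
    have h3 : t + 1 ≤ Real.exp t := Real.add_one_le_exp t
    rw [abs_of_nonneg (by linarith), habs]
    nlinarith

private lemma eig_le_lmax {U : Matrix (Fin N) (Fin N) ℝ} (hA : A.IsHermitian)
    (hU : U.IsHermitian) (hAU : (U - A).PosSemidef) (i : Fin N) :
    hA.eigenvalues i ≤ ⨆ j, hU.eigenvalues j := by
  set L := ⨆ j, hU.eigenvalues j with hL
  have hpsd : (L • (1 : Matrix (Fin N) (Fin N) ℝ) - U).PosSemidef := by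
    have h1 := hcfc_sub hU (fun _ => L) (fun x => x)
    rw [hcfc_const, hcfc_id] at h1
    rw [h1]
    exact hcfc_psd hU _ fun j =>
      sub_nonneg.mpr (le_ciSup (Set.Finite.bddAbove (Set.finite_range _)) j)
  set x : EuclideanSpace ℝ (Fin N) := hA.eigenvectorBasis i with hxdef
  have hxx : (x : Fin N → ℝ) ⬝ᵥ (x : Fin N → ℝ) = 1 := by
    have h1 : (x : Fin N → ℝ) ⬝ᵥ (x : Fin N → ℝ) = (inner ℝ x x : ℝ) := by
      simp [dotProduct, PiLp.inner_apply, RCLike.inner_apply, mul_comm]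
      rw [EuclideanSpace.norm_sq_eq]
      simp [Real.norm_eq_abs, sq_abs, sq]
    rw [h1, real_inner_self_eq_norm_sq, hA.eigenvectorBasis.orthonormal.1 i]
    norm_num
  have hAx : A *ᵥ (x : Fin N → ℝ) = hA.eigenvalues i • (x : Fin N → ℝ) :=
    hA.mulVec_eigenvectorBasis i
  have e1 : (x : Fin N → ℝ) ⬝ᵥ (A *ᵥ x) = hA.eigenvalues i := by
    rw [hAx, dotProduct_smul, smul_eq_mul, hxx, mul_one]
  have e2 : (x : Fin N → ℝ) ⬝ᵥ (U *ᵥ x) ≤ L := by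
    have h0 := hpsd.dotProduct_mulVec_nonneg (x : Fin N → ℝ)
    rw [star_trivial, sub_mulVec, dotProduct_sub, smul_mulVec, one_mulVec,
      dotProduct_smul, smul_eq_mul, hxx, mul_one] at h0
    linarith
  have e3 := hAU.dotProduct_mulVec_nonneg (x : Fin N → ℝ)
  rw [star_trivial, sub_mulVec, dotProduct_sub] at e3
  linarith

end Aux

theorem stmt5 {n : ℕ} (A B U : Matrix (Fin n) (Fin n) ℝ) (c : ℝ)
    (hA : A.PosDef) (hB : B.PosDef) (hU : U.PosDef)
    (hAU : Loewner A U) (hc : 0 < c) (hd : deltaInf A B ≤ c) :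
    ‖A - B‖ ≤ lmax U * ((Real.exp c - 1) / c) * deltaInf A B := by
  rcases Nat.eq_zero_or_pos n with h0 | hn
  · subst h0
    have e1 : A - B = 0 := by ext i j; exact i.elim0
    have e2 : deltaInf A B = 0 := by
      rw [deltaInf]
      have : mlog (minvSqrt A * B * minvSqrt A) = 0 := by ext i j; exact i.elim0
      rw [this, norm_zero]
    rw [e1, e2, norm_zero, mul_zero]
  have : Nonempty (Fin n) := ⟨⟨0, hn⟩⟩
  have hAh := hA.1
  set μ := hAh.eigenvalues with hμ
  have μpos : ∀ i, 0 < μ i := hA.eigenvalues_pos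
  set S := hAh.cfc Real.sqrt with hSdef
  set Si := hAh.cfc (fun x => (Real.sqrt x)⁻¹) with hSidef
  have hSi_eq : minvSqrt A = Si := by rw [minvSqrt, dif_pos hAh]
  have hSSi : S * Si = 1 := by
    rw [hSdef, hSidef, hcfc_mul,
      hcfc_congr hAh (g := fun _ => 1) fun i => mul_inv_cancel₀ (Real.sqrt_ne_zero'.mpr (μpos i)), hcfc_one]
  have hSiS : Si * S = 1 := by
    rw [hSdef, hSidef, hcfc_mul,
      hcfc_congr hAh (g := fun _ => 1) fun i => inv_mul_cancel₀ (Real.sqrt_ne_zero'.mpr (μpos i)), hcfc_one]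
  have hSS : S * S = A := by
    rw [hSdef, hcfc_mul,
      hcfc_congr hAh (g := fun x => x) fun i => Real.mul_self_sqrt (μpos i).le, hcfc_id]
  have hSherm : S.IsHermitian := hcfc_herm hAh _
  have hSiherm : Si.IsHermitian := hcfc_herm hAh _
  set M := minvSqrt A * B * minvSqrt A with hMdef
  have hMeq : M = Si * B * Si := by rw [hMdef, hSi_eq]
  have hM : M.IsHermitian := by
    rw [hMeq]
    have h1 := isHermitian_conjTranspose_mul_mul Si hB.1
    rwa [hSiherm.eq] at h1
  have hMpd : M.PosDef := by
    refine .of_dotProduct_mulVec_pos hM fun x hx => ?_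
    have hx' : Si *ᵥ x ≠ 0 := by
      intro hz
      apply hx
      have h2 : S *ᵥ (Si *ᵥ x) = 0 := by rw [hz, mulVec_zero]
      rwa [mulVec_mulVec, hSSi, one_mulVec] at h2
    have hkey := hB.dotProduct_mulVec_pos hx'
    rw [star_trivial] at hkey
    rw [star_trivial, hMeq]
    have e : x ⬝ᵥ ((Si * B * Si) *ᵥ x) = (Si *ᵥ x) ⬝ᵥ (B *ᵥ (Si *ᵥ x)) := by
      rw [← mulVec_mulVec, ← mulVec_mulVec, dotProduct_mulVec x Si]
      congr 1
      rw [← vecMul_transpose]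
      congr 1
      rw [← conjTranspose_eq_transpose_of_trivial, hSiherm.eq]
    rw [e]
    exact hkey
  set ν := hM.eigenvalues with hν
  have νpos : ∀ i, 0 < ν i := hMpd.eigenvalues_pos
  have hδ : deltaInf A B = ‖(diagonal (Real.log ∘ ν) : Matrix (Fin n) (Fin n) ℝ)‖ := by
    rw [deltaInf, ← hMdef, mlog, dif_pos hM, hcfc_norm_eq]
  have δnonneg : 0 ≤ deltaInf A B := by rw [hδ]; exact norm_nonneg _
  have hlog_le : ∀ i, |Real.log (ν i)| ≤ deltaInf A B := fun i => by
    rw [hδ]; exact le_diag_norm (Real.log ∘ ν) i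
  set K := (Real.exp c - 1) / c with hK
  have hK1 : 1 ≤ K := by
    rw [hK, le_div_iff₀ hc]
    nlinarith [Real.add_one_le_exp c]
  have hK0 : 0 ≤ K := le_trans zero_le_one hK1
  have h1M : (1 : Matrix (Fin n) (Fin n) ℝ) - M = hM.cfc (fun x => 1 - x) := by
    have h1 := hcfc_sub hM (fun _ => 1) (fun x => x)
    rw [hcfc_one, hcfc_id] at h1
    exact h1
  have hnorm1M : ‖(1 : Matrix (Fin n) (Fin n) ℝ) - M‖ ≤ K * deltaInf A B := by
    rw [h1M, hcfc_norm_eq]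
    refine diag_norm_le _ (mul_nonneg hK0 δnonneg) fun i => ?_
    show |1 - ν i| ≤ _
    have hti : |Real.log (ν i)| ≤ c := le_trans (hlog_le i) hd
    have hs := scalar_exp_bound hc hti
    rw [Real.exp_log (νpos i)] at hs
    calc |1 - ν i| ≤ K * |Real.log (ν i)| := hs
      _ ≤ K * deltaInf A B := mul_le_mul_of_nonneg_left (hlog_le i) hK0
  have hlmaxpos : 0 ≤ lmax U := by
    rw [lmax, dif_pos hU.1]
    exact le_trans (hU.eigenvalues_pos ⟨0, hn⟩).le
      (le_ciSup (Set.Finite.bddAbove (Set.finite_range _)) _)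
  have hAnorm : ‖A‖ ≤ lmax U := by
    conv_lhs => rw [← hcfc_id hAh]
    rw [hcfc_norm_eq]
    refine diag_norm_le _ hlmaxpos fun i => ?_
    show |μ i| ≤ lmax U
    rw [abs_of_pos (μpos i), lmax, dif_pos hU.1]
    exact eig_le_lmax hAh hU.1 hAU i
  have hMB : S * M * S = B := by
    rw [hMeq]
    simp only [← mul_assoc]
    rw [hSSi, one_mul, mul_assoc, hSiS, mul_one]
  have hAB : A - B = S * (1 - M) * S := by
    rw [mul_sub, mul_one, sub_mul, hSS, hMB]
  calc ‖A - B‖ = ‖S * (1 - M) * S‖ := by rw [hAB]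
    _ ≤ ‖S * (1 - M)‖ * ‖S‖ := norm_mul_le _ _
    _ ≤ (‖S‖ * ‖(1 : Matrix (Fin n) (Fin n) ℝ) - M‖) * ‖S‖ :=
        mul_le_mul_of_nonneg_right (norm_mul_le _ _) (norm_nonneg _)
    _ = ‖S‖ * ‖S‖ * ‖(1 : Matrix (Fin n) (Fin n) ℝ) - M‖ := by ring
    _ = ‖A‖ * ‖(1 : Matrix (Fin n) (Fin n) ℝ) - M‖ := by
        rw [← Matrix.l2_opNorm_conjTranspose_mul_self S, hSherm.eq, hSS]
    _ ≤ lmax U * (K * deltaInf A B) :=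
        mul_le_mul hAnorm hnorm1M (norm_nonneg _) hlmaxpos
    _ = lmax U * K * deltaInf A B := by ring
end
end

section
/- Let $F_{Q,R}(P)$ be the Riccati operator and suppose $0 \prec Q_1 \preceq Q_2$, $0 \prec R_1 \preceq R_2$, and $0 \preceq P_1 \preceq P_2$. Then $F_{Q_1,R_1}(P_1) \preceq F_{Q_2,R_2}(P_2)$. -/
open scoped Matrix.Norms.L2Operator Classical
open Matrix

noncomputable section

lemma key_expand {m n : ℕ} (S : Matrix (Fin m) (Fin m) ℝ) (K M : Matrix (Fin m) (Fin n) ℝ)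
    (h1 : S⁻¹ * S = 1) (h2 : S * S⁻¹ = 1) (h3 : S⁻¹ᵀ = S⁻¹) :
    (K + S⁻¹ * M)ᵀ * S * (K + S⁻¹ * M)
      = Kᵀ * S * K + Kᵀ * M + Mᵀ * K + Mᵀ * S⁻¹ * M := by
  rw [Matrix.transpose_add, Matrix.transpose_mul, h3,
    Matrix.add_mul, Matrix.add_mul, Matrix.mul_add, Matrix.mul_add]
  have e1 : Kᵀ * S * (S⁻¹ * M) = Kᵀ * M := by
    rw [Matrix.mul_assoc (Kᵀ) S, ← Matrix.mul_assoc S, h2, Matrix.one_mul]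
  have e2 : Mᵀ * S⁻¹ * S * K = Mᵀ * K := by
    rw [Matrix.mul_assoc (Mᵀ), h1, Matrix.mul_one]
  have e3 : Mᵀ * S⁻¹ * S * (S⁻¹ * M) = Mᵀ * S⁻¹ * M := by
    rw [Matrix.mul_assoc (Mᵀ), h1, Matrix.mul_one, Matrix.mul_assoc]
  rw [e1, e2, e3]
  abel

lemma complete_square {n m : ℕ} (A : Matrix (Fin n) (Fin n) ℝ) (B : Matrix (Fin n) (Fin m) ℝ)
    (Q P : Matrix (Fin n) (Fin n) ℝ) (R : Matrix (Fin m) (Fin m) ℝ)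
    (K : Matrix (Fin m) (Fin n) ℝ)
    (hP : P.IsHermitian) (hS : (R + Bᵀ * P * B).PosDef) :
    Q + Kᵀ * R * K + (A + B * K)ᵀ * P * (A + B * K)
      = Ricc A B Q R P
        + (K + (R + Bᵀ * P * B)⁻¹ * (Bᵀ * P * A))ᵀ * (R + Bᵀ * P * B)
          * (K + (R + Bᵀ * P * B)⁻¹ * (Bᵀ * P * A)) := by
  have hdet : IsUnit (R + Bᵀ * P * B).det := isUnit_iff_ne_zero.mpr hS.det_pos.ne'
  have hSH : (R + Bᵀ * P * B)ᵀ = (R + Bᵀ * P * B) := by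
    simpa [Matrix.conjTranspose_eq_transpose_of_trivial] using hS.isHermitian.eq
  have hinv : (R + Bᵀ * P * B)⁻¹ * (R + Bᵀ * P * B) = 1 := Matrix.nonsing_inv_mul _ hdet
  have hinv' : (R + Bᵀ * P * B) * (R + Bᵀ * P * B)⁻¹ = 1 := Matrix.mul_nonsing_inv _ hdet
  have hSiT : (R + Bᵀ * P * B)⁻¹ᵀ = (R + Bᵀ * P * B)⁻¹ := by
    rw [Matrix.transpose_nonsing_inv, hSH]
  have hPT : Pᵀ = P := by
    simpa [Matrix.conjTranspose_eq_transpose_of_trivial] using hP.eq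
  rw [key_expand _ _ _ hinv hinv' hSiT]
  have hMT : (Bᵀ * P * A)ᵀ = Aᵀ * P * B := by
    simp [Matrix.transpose_mul, hPT, Matrix.mul_assoc]
  rw [hMT, Ricc]
  have hA2 : (A + B * K)ᵀ * P * (A + B * K)
      = Aᵀ * P * A + (Aᵀ * P * B) * K + Kᵀ * (Bᵀ * P * A) + Kᵀ * (Bᵀ * P * B) * K := by
    rw [Matrix.transpose_add, Matrix.transpose_mul]
    simp only [Matrix.add_mul, Matrix.mul_add, Matrix.mul_assoc]; abel
  rw [hA2]
  have h5 : Aᵀ * P * B * (R + Bᵀ * P * B)⁻¹ * Bᵀ * P * A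
      = Aᵀ * P * B * (R + Bᵀ * P * B)⁻¹ * (Bᵀ * P * A) := by
    simp only [Matrix.mul_assoc]
  rw [h5]
  have h6 : Kᵀ * (R + Bᵀ * P * B) * K = Kᵀ * R * K + Kᵀ * (Bᵀ * P * B) * K := by
    rw [Matrix.mul_add, Matrix.add_mul]
  rw [h6]
  abel


theorem stmt10 {n m : ℕ} (A : Matrix (Fin n) (Fin n) ℝ) (B : Matrix (Fin n) (Fin m) ℝ)
    (Q₁ Q₂ : Matrix (Fin n) (Fin n) ℝ) (R₁ R₂ : Matrix (Fin m) (Fin m) ℝ)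
    (P₁ P₂ : Matrix (Fin n) (Fin n) ℝ)
    (hQ₁ : Q₁.PosDef) (hQ : Loewner Q₁ Q₂)
    (hR₁ : R₁.PosDef) (hR : Loewner R₁ R₂)
    (hP₁ : P₁.PosSemidef) (hP₂ : P₂.PosSemidef) (hP : Loewner P₁ P₂) :
    Loewner (Ricc A B Q₁ R₁ P₁) (Ricc A B Q₂ R₂ P₂) := by
  have hR₂ : R₂.PosDef := by
    have := hR₁.add_posSemidef hR
    simpa using this
  have hBP₁ : (Bᵀ * P₁ * B).PosSemidef := by
    simpa [Matrix.conjTranspose_eq_transpose_of_trivial] using hP₁.conjTranspose_mul_mul_same B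
  have hBP₂ : (Bᵀ * P₂ * B).PosSemidef := by
    simpa [Matrix.conjTranspose_eq_transpose_of_trivial] using hP₂.conjTranspose_mul_mul_same B
  have hS₁ : (R₁ + Bᵀ * P₁ * B).PosDef := hR₁.add_posSemidef hBP₁
  have hS₂ : (R₂ + Bᵀ * P₂ * B).PosDef := hR₂.add_posSemidef hBP₂
  set K : Matrix (Fin m) (Fin n) ℝ := -((R₂ + Bᵀ * P₂ * B)⁻¹ * (Bᵀ * P₂ * A)) with hK
  have eq2 := complete_square A B Q₂ P₂ R₂ K hP₂.isHermitian hS₂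
  have hK0 : K + (R₂ + Bᵀ * P₂ * B)⁻¹ * (Bᵀ * P₂ * A) = 0 := by rw [hK]; exact neg_add_cancel _
  rw [hK0] at eq2
  simp only [Matrix.transpose_zero, Matrix.zero_mul, Matrix.mul_zero, add_zero] at eq2
  have eq1 := complete_square A B Q₁ P₁ R₁ K hP₁.isHermitian hS₁
  -- the difference
  have key : Ricc A B Q₂ R₂ P₂ - Ricc A B Q₁ R₁ P₁
      = (Q₂ - Q₁) + Kᵀ * (R₂ - R₁) * K + (A + B * K)ᵀ * (P₂ - P₁) * (A + B * K)
        + (K + (R₁ + Bᵀ * P₁ * B)⁻¹ * (Bᵀ * P₁ * A))ᵀ * (R₁ + Bᵀ * P₁ * B)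
          * (K + (R₁ + Bᵀ * P₁ * B)⁻¹ * (Bᵀ * P₁ * A)) := by
    rw [← eq2]
    have e1 : Ricc A B Q₁ R₁ P₁
        = Q₁ + Kᵀ * R₁ * K + (A + B * K)ᵀ * P₁ * (A + B * K)
          - (K + (R₁ + Bᵀ * P₁ * B)⁻¹ * (Bᵀ * P₁ * A))ᵀ * (R₁ + Bᵀ * P₁ * B)
            * (K + (R₁ + Bᵀ * P₁ * B)⁻¹ * (Bᵀ * P₁ * A)) := by
      rw [eq1]; abel
    rw [e1]
    simp only [Matrix.mul_sub, Matrix.sub_mul]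
    abel
  have t1 : (Kᵀ * (R₂ - R₁) * K).PosSemidef := by
    simpa [Matrix.conjTranspose_eq_transpose_of_trivial] using hR.conjTranspose_mul_mul_same K
  have t2 : ((A + B * K)ᵀ * (P₂ - P₁) * (A + B * K)).PosSemidef := by
    simpa [Matrix.conjTranspose_eq_transpose_of_trivial] using
      hP.conjTranspose_mul_mul_same (A + B * K)
  have t3 : ((K + (R₁ + Bᵀ * P₁ * B)⁻¹ * (Bᵀ * P₁ * A))ᵀ * (R₁ + Bᵀ * P₁ * B)
      * (K + (R₁ + Bᵀ * P₁ * B)⁻¹ * (Bᵀ * P₁ * A))).PosSemidef := by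
    simpa [Matrix.conjTranspose_eq_transpose_of_trivial] using
      hS₁.posSemidef.conjTranspose_mul_mul_same (K + (R₁ + Bᵀ * P₁ * B)⁻¹ * (Bᵀ * P₁ * A))
  unfold Loewner
  rw [key]
  exact ((hQ.add t1).add t2).add t3
end
end

section
/- Let $P \succ 0$ and $\bar P \succ 0$ be symmetric matrices with $Q_{\min} \preceq P, \bar P \preceq P_{\max}$ for positive definite $Q_{\min}, P_{\max}$, and suppose $\delta_\infty(P, \bar P) \le \gamma^k \log\left(\frac{\lambda_{\max}(P_{\max})}{\lambda_{\min}(Q_{\min})}\right)$ for some $\gamma \in (0,1)$ and integer $k \ge 0$. Then $\|P - \bar P\| \le \gamma^k\, \frac{\lambda_{\max}(P_{\max})^2}{\lambda_{\min}(Q_{\min})}$. -/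
open scoped Matrix.Norms.L2Operator Classical
open Matrix

noncomputable section

namespace Stmt18Aux

variable {n : ℕ}

lemma contOn (A : Matrix (Fin n) (Fin n) ℝ) (f : ℝ → ℝ) :
    ContinuousOn f (spectrum ℝ A) :=
  (Matrix.finite_real_spectrum (A := A)).continuousOn f

lemma norm_unitary_mul (U A : Matrix (Fin n) (Fin n) ℝ)
    (hU : U ∈ Matrix.unitaryGroup (Fin n) ℝ) : ‖U * A‖ = ‖A‖ := by
  have hU' : star U * U = 1 := mem_unitaryGroup_iff'.mp hU
  have h1 : (U * A)ᴴ * (U * A) = Aᴴ * A := by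
    rw [conjTranspose_mul, Matrix.mul_assoc, ← Matrix.mul_assoc Uᴴ U A,
      ← Matrix.star_eq_conjTranspose U, hU', Matrix.one_mul]
  have h2 := Matrix.l2_opNorm_conjTranspose_mul_self (U * A)
  rw [h1, Matrix.l2_opNorm_conjTranspose_mul_self A] at h2
  exact ((mul_self_inj (norm_nonneg _) (norm_nonneg _)).mp h2).symm

lemma norm_mul_unitary (A U : Matrix (Fin n) (Fin n) ℝ)
    (hU : U ∈ Matrix.unitaryGroup (Fin n) ℝ) : ‖A * U‖ = ‖A‖ := by
  have hU' : star U ∈ Matrix.unitaryGroup (Fin n) ℝ := by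
    rw [mem_unitaryGroup_iff, star_star]
    exact mem_unitaryGroup_iff'.mp hU
  rw [← Matrix.l2_opNorm_conjTranspose (A * U), conjTranspose_mul,
    ← Matrix.star_eq_conjTranspose U, norm_unitary_mul _ _ hU',
    Matrix.l2_opNorm_conjTranspose]


lemma euc_norm_eq (y : EuclideanSpace ℝ (Fin n)) :
    ‖y‖ = Real.sqrt (∑ i, (y i) ^ 2) := by
  rw [EuclideanSpace.norm_eq]
  congr 1
  exact Finset.sum_congr rfl fun i _ => by rw [Real.norm_eq_abs, sq_abs]

lemma norm_diag_le (d : Fin n → ℝ) {c : ℝ} (hc : 0 ≤ c) (h : ∀ i, |d i| ≤ c) :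
    ‖(diagonal d : Matrix (Fin n) (Fin n) ℝ)‖ ≤ c := by
  rw [Matrix.l2_opNorm_def]
  refine ContinuousLinearMap.opNorm_le_bound _ hc fun x => ?_
  have hTx : ∀ i, (toEuclideanCLM (𝕜 := ℝ) (diagonal d) x) i = d i * x i := by
    intro i
    show (diagonal d *ᵥ (WithLp.equiv 2 _ x)) i = _
    rw [Matrix.mulVec_diagonal]
    rfl
  rw [euc_norm_eq, euc_norm_eq, ← Real.sqrt_sq hc, ← Real.sqrt_mul (by positivity)]
  apply Real.sqrt_le_sqrt
  calc ∑ i, (toEuclideanCLM (𝕜 := ℝ) (diagonal d) x i) ^ 2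
      = ∑ i, (d i * x i) ^ 2 := by simp_rw [hTx]
    _ ≤ ∑ i, c ^ 2 * (x i) ^ 2 := by
        refine Finset.sum_le_sum fun i _ => ?_
        rw [mul_pow]
        refine mul_le_mul_of_nonneg_right ?_ (sq_nonneg _)
        calc (d i) ^ 2 = |d i| ^ 2 := (sq_abs _).symm
          _ ≤ c ^ 2 := pow_le_pow_left₀ (abs_nonneg _) (h i) 2
    _ = c ^ 2 * ∑ i, (x i) ^ 2 := by rw [Finset.mul_sum]

lemma abs_le_norm_diag (d : Fin n → ℝ) (i : Fin n) :
    |d i| ≤ ‖(diagonal d : Matrix (Fin n) (Fin n) ℝ)‖ := by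
  have h := Matrix.l2_opNorm_mulVec (diagonal d) (EuclideanSpace.single i 1)
  have h1 : (EuclideanSpace.equiv (Fin n) ℝ).symm
      ((diagonal d) *ᵥ (EuclideanSpace.single i (1:ℝ))) = EuclideanSpace.single i (d i) := by
    ext j
    show (diagonal d *ᵥ (EuclideanSpace.single i 1 : EuclideanSpace ℝ (Fin n))) j
      = (EuclideanSpace.single i (d i) : EuclideanSpace ℝ (Fin n)) j
    rw [Matrix.mulVec_diagonal, EuclideanSpace.single_apply, EuclideanSpace.single_apply]
    by_cases hj : j = i <;> simp [hj]
  rw [h1, EuclideanSpace.norm_single, EuclideanSpace.norm_single] at h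
  simpa using h

lemma quadform_le_norm (A : Matrix (Fin n) (Fin n) ℝ) (v : EuclideanSpace ℝ (Fin n))
    (hv : ‖v‖ = 1) : (v : Fin n → ℝ) ⬝ᵥ (A *ᵥ (v : Fin n → ℝ)) ≤ ‖A‖ := by
  have h := Matrix.l2_opNorm_mulVec A v
  rw [hv, mul_one] at h
  have h2 : (v : Fin n → ℝ) ⬝ᵥ (A *ᵥ (v : Fin n → ℝ))
      = inner ℝ v ((EuclideanSpace.equiv (Fin n) ℝ).symm (A *ᵥ (v : Fin n → ℝ))) := by
    simp [PiLp.inner_apply, dotProduct, RCLike.inner_apply, mul_comm]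
  rw [h2]
  exact (real_inner_le_norm _ _).trans (by rw [hv, one_mul]; exact h)


lemma norm_conj_unitary (U X : Matrix (Fin n) (Fin n) ℝ)
    (hU : U ∈ Matrix.unitaryGroup (Fin n) ℝ) : ‖U * X * star U‖ = ‖X‖ := by
  have hU' : star U ∈ Matrix.unitaryGroup (Fin n) ℝ := by
    rw [mem_unitaryGroup_iff, star_star]
    exact mem_unitaryGroup_iff'.mp hU
  rw [Matrix.mul_assoc, norm_unitary_mul _ _ hU, norm_mul_unitary _ _ hU']

lemma herm_norm_eq_diag {A : Matrix (Fin n) (Fin n) ℝ} (hA : A.IsHermitian) :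
    ‖A‖ = ‖(diagonal hA.eigenvalues : Matrix (Fin n) (Fin n) ℝ)‖ := by
  conv_lhs => rw [hA.spectral_theorem]
  rw [show (RCLike.ofReal ∘ hA.eigenvalues : Fin n → ℝ) = hA.eigenvalues from funext fun i => rfl]
  exact norm_conj_unitary _ _ (SetLike.coe_mem _)

lemma herm_norm_le {A : Matrix (Fin n) (Fin n) ℝ} (hA : A.IsHermitian) {c : ℝ}
    (hc : 0 ≤ c) (h : ∀ i, |hA.eigenvalues i| ≤ c) : ‖A‖ ≤ c := by
  rw [herm_norm_eq_diag hA]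
  exact norm_diag_le _ hc h

lemma abs_eig_le_norm {A : Matrix (Fin n) (Fin n) ℝ} (hA : A.IsHermitian) (i : Fin n) :
    |hA.eigenvalues i| ≤ ‖A‖ := by
  rw [herm_norm_eq_diag hA]
  exact abs_le_norm_diag _ i

lemma loewner_quad {A B : Matrix (Fin n) (Fin n) ℝ} (h : (B - A).PosSemidef)
    (x : Fin n → ℝ) : x ⬝ᵥ (A *ᵥ x) ≤ x ⬝ᵥ (B *ᵥ x) := by
  have h2 := h.dotProduct_mulVec_nonneg x
  rw [star_trivial, Matrix.sub_mulVec, dotProduct_sub] at h2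
  linarith

lemma eig_quadform {A : Matrix (Fin n) (Fin n) ℝ} (hA : A.IsHermitian) (i : Fin n) :
    hA.eigenvalues i = (⇑(hA.eigenvectorBasis i) : Fin n → ℝ) ⬝ᵥ (A *ᵥ ⇑(hA.eigenvectorBasis i)) := by
  have := hA.eigenvalues_eq i
  simpa using this

lemma eig_le_norm_of_loewner {A B : Matrix (Fin n) (Fin n) ℝ} (hA : A.IsHermitian)
    (h : (B - A).PosSemidef) (i : Fin n) : hA.eigenvalues i ≤ ‖B‖ := by
  rw [eig_quadform hA i]
  refine (loewner_quad h _).trans ?_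
  exact quadform_le_norm B (hA.eigenvectorBasis i) (hA.eigenvectorBasis.orthonormal.1 i)


lemma abs_one_sub_le {μ t : ℝ} (hμ : 0 < μ) (ht : |Real.log μ| ≤ t) :
    |1 - μ| ≤ Real.exp t - 1 := by
  rcases le_or_gt 1 μ with h | h
  · rw [abs_sub_comm, abs_of_nonneg (by linarith)]
    have h2 : Real.exp (Real.log μ) ≤ Real.exp t := Real.exp_le_exp.mpr (abs_le.mp ht).2
    rw [Real.exp_log hμ] at h2
    linarith
  · rw [abs_of_nonneg (by linarith)]
    have hl : -Real.log μ ≤ t := neg_le.mpr (abs_le.mp ht).1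
    have h2 : Real.exp (-Real.log μ) ≤ Real.exp t := Real.exp_le_exp.mpr hl
    rw [Real.exp_neg, Real.exp_log hμ] at h2
    have h3 : μ * μ⁻¹ = 1 := mul_inv_cancel₀ (ne_of_gt hμ)
    nlinarith [sq_nonneg (1 - μ)]

lemma exp_convex_bound {x c : ℝ} (hx0 : 0 ≤ x) (hx1 : x ≤ 1) :
    Real.exp (x * c) - 1 ≤ x * (Real.exp c - 1) := by
  have h := convexOn_exp.2 (Set.mem_univ (0:ℝ)) (Set.mem_univ c)
    (by linarith : (0:ℝ) ≤ 1 - x) hx0 (by ring)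
  simp only [smul_eq_mul, mul_zero, zero_add, Real.exp_zero, mul_one] at h
  linarith

end Stmt18Aux

section Stmt18Proof
open Stmt18Aux Real

theorem stmt18' {n : ℕ} (P Pb Qmin Pmax : Matrix (Fin n) (Fin n) ℝ)
    (hP : P.PosDef) (hPb : Pb.PosDef) (hQmin : Qmin.PosDef) (hPmax : Pmax.PosDef)
    (hPlb : Loewner Qmin P) (hPub : Loewner P Pmax)
    (hPblb : Loewner Qmin Pb) (hPbub : Loewner Pb Pmax)
    (γ : ℝ) (hγ : γ ∈ Set.Ioo (0 : ℝ) 1) (k : ℕ)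
    (hd : deltaInf P Pb ≤ γ ^ k * Real.log (lmax Pmax / lmin Qmin)) :
    ‖P - Pb‖ ≤ γ ^ k * (lmax Pmax) ^ 2 / lmin Qmin := by
  rcases Nat.eq_zero_or_pos n with hn | hn
  · subst hn
    have hz : P - Pb = 0 := by ext i j; exact i.elim0
    have h1 : lmax Pmax = 0 := by
      rw [lmax, dif_pos hPmax.1]; exact Real.iSup_of_isEmpty _
    have h2 : lmin Qmin = 0 := by
      rw [lmin, dif_pos hQmin.1]; exact Real.iInf_of_isEmpty _
    rw [hz, h1, h2, norm_zero]
    simp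
  haveI : Nonempty (Fin n) := ⟨⟨0, hn⟩⟩
  have hγk0 : 0 < γ ^ k := pow_pos hγ.1 k
  have hγk1 : γ ^ k ≤ 1 := pow_le_one₀ hγ.1.le hγ.2.le
  -- eigenvalue bounds
  have hlmax_def : lmax Pmax = ⨆ i, hPmax.1.eigenvalues i := dif_pos hPmax.1
  have hlmin_def : lmin Qmin = ⨅ i, hQmin.1.eigenvalues i := dif_pos hQmin.1
  have hle_lmax : ∀ i, hPmax.1.eigenvalues i ≤ lmax Pmax := by
    intro i
    rw [hlmax_def]
    exact le_ciSup (Set.Finite.bddAbove (Set.finite_range _)) i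
  obtain ⟨i0, hi0⟩ := exists_eq_ciInf_of_finite (f := hQmin.1.eigenvalues)
  have hlm_pos : 0 < lmin Qmin := by
    rw [hlmin_def, ← hi0]; exact hQmin.eigenvalues_pos i0
  have hPmax_norm : ‖Pmax‖ ≤ lmax Pmax := by
    refine herm_norm_le hPmax.1 (le_trans ?_ (hle_lmax (Classical.arbitrary _))) fun i => ?_
    · exact (hPmax.eigenvalues_pos _).le
    · rw [abs_of_pos (hPmax.eigenvalues_pos i)]; exact hle_lmax i
  have hP_norm : ‖P‖ ≤ lmax Pmax := by
    refine herm_norm_le hP.1 ((norm_nonneg Pmax).trans hPmax_norm) fun i => ?_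
    rw [abs_of_pos (hP.eigenvalues_pos i)]
    exact (eig_le_norm_of_loewner hP.1 hPub i).trans hPmax_norm
  have hlM_pos : 0 < lmax Pmax := lt_of_lt_of_le (hPmax.eigenvalues_pos (Classical.arbitrary _))
      (hle_lmax _)
  have hlm_le_lM : lmin Qmin ≤ lmax Pmax := by
    rw [hlmin_def, ← hi0]
    exact (eig_le_norm_of_loewner hQmin.1 hPlb i0).trans hP_norm
  set c : ℝ := Real.log (lmax Pmax / lmin Qmin) with hc_def
  have hc0 : 0 ≤ c := Real.log_nonneg ((one_le_div hlm_pos).mpr hlm_le_lM)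
  have hexpc : Real.exp c = lmax Pmax / lmin Qmin :=
    Real.exp_log (div_pos hlM_pos hlm_pos)
  -- matrix algebra
  have hPsa : IsSelfAdjoint P := hP.1
  have hspecP : ∀ x ∈ spectrum ℝ P, 0 < x := by
    rw [hP.1.spectrum_real_eq_range_eigenvalues]
    rintro x ⟨i, rfl⟩
    exact hP.eigenvalues_pos i
  set S : Matrix (Fin n) (Fin n) ℝ := minvSqrt P with hS_def
  set R : Matrix (Fin n) (Fin n) ℝ := cfc Real.sqrt P with hR_def
  have hScfc : S = cfc (fun x : ℝ => (Real.sqrt x)⁻¹) P := by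
    rw [hS_def, minvSqrt, dif_pos hP.1, hP.1.cfc_eq]
  have hRcfc : R = cfc Real.sqrt P := by
    exact hR_def
  have hRS : R * S = 1 := by
    rw [hScfc, hRcfc, ← cfc_mul _ _ P ((Matrix.finite_real_spectrum (A := P)).continuousOn _)
      ((Matrix.finite_real_spectrum (A := P)).continuousOn _)]
    calc cfc (fun x : ℝ => Real.sqrt x * (Real.sqrt x)⁻¹) P
        = cfc (fun _ : ℝ => (1:ℝ)) P := by
          refine cfc_congr fun x hx => ?_
          have : Real.sqrt x ≠ 0 := ne_of_gt (Real.sqrt_pos.mpr (hspecP x hx))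
          field_simp
      _ = 1 := cfc_const_one ℝ P
  have hSR : S * R = 1 := by
    rw [hScfc, hRcfc, ← cfc_mul _ _ P ((Matrix.finite_real_spectrum (A := P)).continuousOn _)
      ((Matrix.finite_real_spectrum (A := P)).continuousOn _)]
    calc cfc (fun x : ℝ => (Real.sqrt x)⁻¹ * Real.sqrt x) P
        = cfc (fun _ : ℝ => (1:ℝ)) P := by
          refine cfc_congr fun x hx => ?_
          have : Real.sqrt x ≠ 0 := ne_of_gt (Real.sqrt_pos.mpr (hspecP x hx))
          field_simp
      _ = 1 := cfc_const_one ℝ P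
  have hRR : R * R = P := by
    rw [hRcfc, ← cfc_mul (fun x => Real.sqrt x) (fun x => Real.sqrt x) P]
    conv_rhs => rw [← cfc_id' ℝ P]
    exact cfc_congr fun x hx => Real.mul_self_sqrt (hspecP x hx).le
  have hRherm : R.IsHermitian := (hRcfc ▸ cfc_predicate _ P : IsSelfAdjoint R)
  have hSsa : IsSelfAdjoint S := hScfc ▸ cfc_predicate _ P
  have hSherm : S.IsHermitian := hSsa
  set M : Matrix (Fin n) (Fin n) ℝ := S * Pb * S with hM_def
  have hMherm : M.IsHermitian := by
    show Mᴴ = M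
    rw [hM_def, Matrix.conjTranspose_mul, Matrix.conjTranspose_mul, hSherm.eq, hPb.1.eq,
      Matrix.mul_assoc]
  have hStrans : Sᵀ = S := by
    rw [← Matrix.conjTranspose_eq_transpose_of_trivial]; exact hSherm.eq
  have hMpos : M.PosDef := by
    refine .of_dotProduct_mulVec_pos hMherm fun x hx => ?_
    have hSx : S *ᵥ x ≠ 0 := by
      intro h0
      apply hx
      have : (R * S) *ᵥ x = R *ᵥ (S *ᵥ x) := (Matrix.mulVec_mulVec _ _ _).symm
      rw [hRS, Matrix.one_mulVec, h0, Matrix.mulVec_zero] at this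
      exact this
    have key : star x ⬝ᵥ (M *ᵥ x) = star (S *ᵥ x) ⬝ᵥ (Pb *ᵥ (S *ᵥ x)) := by
      rw [star_trivial, star_trivial, hM_def, ← Matrix.mulVec_mulVec, ← Matrix.mulVec_mulVec,
        Matrix.dotProduct_mulVec x S, ← hStrans, Matrix.vecMul_transpose, hStrans]
    rw [key]
    exact hPb.dotProduct_mulVec_pos hSx
  set μ : Fin n → ℝ := hMherm.eigenvalues with hμ_def
  have hμpos : ∀ i, 0 < μ i := hMpos.eigenvalues_pos
  -- delta bound on eigenvalues
  have hmlog : mlog M = hMherm.cfc Real.log := dif_pos hMherm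
  have hdelta : ∀ i, |Real.log (μ i)| ≤ γ ^ k * c := by
    intro i
    refine le_trans ?_ hd
    show |Real.log (μ i)| ≤ ‖mlog M‖
    rw [hmlog, Matrix.IsHermitian.cfc,
      show (RCLike.ofReal ∘ Real.log ∘ hMherm.eigenvalues : Fin n → ℝ)
        = Real.log ∘ μ from funext fun _ => rfl,
      Unitary.conjStarAlgAut_apply, norm_conj_unitary _ _ (SetLike.coe_mem _)]
    exact abs_le_norm_diag (Real.log ∘ μ) i
  -- factorization
  have hfact : P - Pb = R * (1 - M) * R := by
    rw [Matrix.mul_sub, Matrix.mul_one, Matrix.sub_mul, hRR]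
    congr 1
    rw [hM_def]
    symm
    calc R * (S * Pb * S) * R = ((R * S) * Pb) * (S * R) := by
          simp only [Matrix.mul_assoc]
      _ = Pb := by rw [hRS, hSR, Matrix.one_mul, Matrix.mul_one]
  -- norm of 1 - M
  have hexp1 : (1:ℝ) ≤ Real.exp (γ ^ k * c) := by
    rw [← Real.exp_zero]
    exact Real.exp_le_exp.mpr (by positivity)
  have h1M : ‖(1 : Matrix (Fin n) (Fin n) ℝ) - M‖ ≤ Real.exp (γ ^ k * c) - 1 := by
    have hUmem : (hMherm.eigenvectorUnitary : Matrix (Fin n) (Fin n) ℝ)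
        ∈ Matrix.unitaryGroup (Fin n) ℝ := SetLike.coe_mem _
    have hone : (1 : Matrix (Fin n) (Fin n) ℝ)
        = (hMherm.eigenvectorUnitary : Matrix (Fin n) (Fin n) ℝ) * 1
          * star (hMherm.eigenvectorUnitary : Matrix (Fin n) (Fin n) ℝ) := by
      rw [Matrix.mul_one, mem_unitaryGroup_iff.mp hUmem]
    have h1m : (1 : Matrix (Fin n) (Fin n) ℝ) - M
        = (hMherm.eigenvectorUnitary : Matrix (Fin n) (Fin n) ℝ)
          * diagonal (fun i => 1 - μ i)
          * star (hMherm.eigenvectorUnitary : Matrix (Fin n) (Fin n) ℝ) := by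
      have hMspec : M = (hMherm.eigenvectorUnitary : Matrix (Fin n) (Fin n) ℝ)
          * diagonal μ * star (hMherm.eigenvectorUnitary : Matrix (Fin n) (Fin n) ℝ) :=
        hMherm.spectral_theorem
      have hdsub : (diagonal (fun i => 1 - μ i) : Matrix (Fin n) (Fin n) ℝ)
          = 1 - diagonal μ := by
        ext i j
        by_cases h : i = j <;> simp [Matrix.diagonal_apply, h, Matrix.one_apply]
      rw [hdsub, Matrix.mul_sub, Matrix.sub_mul, Matrix.mul_one, ← hMspec,
        mem_unitaryGroup_iff.mp hUmem]
    rw [h1m, norm_conj_unitary _ _ hUmem]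
    refine norm_diag_le _ (by linarith) fun i => ?_
    exact abs_one_sub_le (hμpos i) (hdelta i)
  -- assemble
  have hRnorm : ‖R‖ * ‖R‖ = ‖P‖ := by
    rw [← Matrix.l2_opNorm_conjTranspose_mul_self R, hRherm.eq, hRR]
  have hchain : ‖P - Pb‖ ≤ ‖P‖ * ‖(1 : Matrix (Fin n) (Fin n) ℝ) - M‖ := by
    rw [hfact]
    calc ‖R * (1 - M) * R‖ ≤ ‖R * (1 - M)‖ * ‖R‖ := norm_mul_le _ _
      _ ≤ ‖R‖ * ‖(1 : Matrix (Fin n) (Fin n) ℝ) - M‖ * ‖R‖ :=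
          mul_le_mul_of_nonneg_right (norm_mul_le _ _) (norm_nonneg _)
      _ = ‖R‖ * ‖R‖ * ‖(1 : Matrix (Fin n) (Fin n) ℝ) - M‖ := by ring
      _ = ‖P‖ * ‖(1 : Matrix (Fin n) (Fin n) ℝ) - M‖ := by rw [hRnorm]
  have hstep : ‖P - Pb‖ ≤ lmax Pmax * (γ ^ k * (Real.exp c - 1)) := by
    refine hchain.trans ?_
    have h2 : ‖(1 : Matrix (Fin n) (Fin n) ℝ) - M‖ ≤ γ ^ k * (Real.exp c - 1) :=
      h1M.trans (exp_convex_bound hγk0.le hγk1)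
    have hec : (1:ℝ) ≤ Real.exp c := by
      rw [← Real.exp_zero]; exact Real.exp_le_exp.mpr hc0
    have h3 : (0:ℝ) ≤ γ ^ k * (Real.exp c - 1) := mul_nonneg hγk0.le (by linarith)
    exact mul_le_mul hP_norm h2 (norm_nonneg _) (le_of_lt hlM_pos) |>.trans_eq rfl
  refine hstep.trans ?_
  rw [hexpc]
  have hexpand : lmax Pmax * (γ ^ k * (lmax Pmax / lmin Qmin - 1))
      = γ ^ k * (lmax Pmax) ^ 2 / lmin Qmin - γ ^ k * lmax Pmax := by
    field_simp
  rw [hexpand]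
  have : 0 ≤ γ ^ k * lmax Pmax := by positivity
  linarith

theorem stmt18 {n : ℕ} (P Pb Qmin Pmax : Matrix (Fin n) (Fin n) ℝ)
    (hP : P.PosDef) (hPb : Pb.PosDef) (hQmin : Qmin.PosDef) (hPmax : Pmax.PosDef)
    (hPlb : Loewner Qmin P) (hPub : Loewner P Pmax)
    (hPblb : Loewner Qmin Pb) (hPbub : Loewner Pb Pmax)
    (γ : ℝ) (hγ : γ ∈ Set.Ioo (0 : ℝ) 1) (k : ℕ)
    (hd : deltaInf P Pb ≤ γ ^ k * Real.log (lmax Pmax / lmin Qmin)) :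
    ‖P - Pb‖ ≤ γ ^ k * (lmax Pmax) ^ 2 / lmin Qmin :=
  stmt18' P Pb Qmin Pmax hP hPb hQmin hPmax hPlb hPub hPblb hPbub γ hγ k hd

end Stmt18Proof
end
end
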